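/- Let X and Y be finite types with basepoints 0 and maps f : X → X, g : Y → Y fixing the basepoints, with both f and g nilpotent and both graphs Γ_X, Γ_Y connected (so Γ_X, Γ_Y are rooted trees). Let h be the smash structure map on X × Y. Then the graph of the smash product, with vertex set {(x, y) : x ≠ 0 and y ≠ 0} and the equivalence relation generated by the pairs (p, h p) for h p ≠ (0,0), has exactly (card {x : X // x ≠ 0}) + (card {y : Y // y ≠ 0}) − 1 equivalence classes. (Γ_{M ∧ N} consists of dim M + dim N − 1 rooted trees.) -/
import Mathlib

open Function

theorem key_sinks {Z : Type*} (V : Z → Prop) (F : Z → Z)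
    (R : {z : Z // V z} → {z : Z // V z} → Prop)
    (hR : ∀ a b : {z : Z // V z}, R a b ↔ (V (F a.1) ∧ b.1 = F a.1))
    (hnil : ∀ z : Z, V z → ∃ n : ℕ, ¬ V (F^[n] z)) :
    Nat.card (Quot (Relation.EqvGen R)) = Nat.card {z : Z // V z ∧ ¬ V (F z)} := by
  classical
  have ex : ∀ z : {z : Z // V z}, ∃ n : ℕ, ¬ V (F^[n] z.1) := fun z => hnil z.1 z.2
  let nn : {z : Z // V z} → ℕ := fun z => Nat.find (ex z)
  have hdead : ∀ z, ¬ V (F^[nn z] z.1) := fun z => Nat.find_spec (ex z)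
  have hlive : ∀ z, ∀ k, k < nn z → V (F^[k] z.1) := by
    intro z k hk
    by_contra hcon
    have h2 : nn z ≤ k := Nat.find_le hcon
    omega
  have hpos : ∀ z, 0 < nn z := by
    intro z
    rcases Nat.eq_zero_or_pos (nn z) with h0 | hp
    · exact absurd (hdead z) (by rw [h0]; simpa using z.2)
    · exact hp
  let sink : {z : Z // V z} → {z : Z // V z} :=
    fun z => ⟨F^[nn z - 1] z.1, hlive z _ (by have := hpos z; omega)⟩
  have hsinkdead : ∀ z, ¬ V (F (sink z).1) := by
    intro z
    have h1 : nn z - 1 + 1 = nn z := by have := hpos z; omega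
    have heq : F ((sink z).1) = F^[nn z] z.1 := by
      show F (F^[nn z - 1] z.1) = _
      calc F (F^[nn z - 1] z.1) = F^[nn z - 1 + 1] z.1 :=
            (Function.iterate_succ_apply' F _ _).symm
        _ = F^[nn z] z.1 := by rw [h1]
    rw [heq]
    exact hdead z
  have hfix : ∀ z, ¬ V (F z.1) → sink z = z := by
    intro z hz
    have h1 : nn z = 1 := by
      have hle : nn z ≤ 1 := Nat.find_le (by simpa using hz)
      have := hpos z; omega
    apply Subtype.ext
    show F^[nn z - 1] z.1 = z.1
    rw [h1]
    simp
  have hstep : ∀ (z : {z : Z // V z}) (hz : V (F z.1)),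
      nn (⟨F z.1, hz⟩ : {z : Z // V z}) = nn z - 1 ∧
        sink (⟨F z.1, hz⟩ : {z : Z // V z}) = sink z := by
    intro z hz
    set z' : {z : Z // V z} := ⟨F z.1, hz⟩ with hz'
    have h2 : 2 ≤ nn z := by
      by_contra hc
      push_neg at hc
      have h1 : nn z = 1 := by have := hpos z; omega
      have hd := hdead z
      rw [h1] at hd
      simp only [Function.iterate_one] at hd
      exact hd hz
    have hnn : nn z' = nn z - 1 := by
      have hle : nn z' ≤ nn z - 1 := by
        apply Nat.find_le
        show ¬ V (F^[nn z - 1] z'.1)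
        have : F^[nn z - 1] z'.1 = F^[nn z] z.1 := by
          show F^[nn z - 1] (F z.1) = _
          rw [← Function.iterate_succ_apply]
          congr 1
          omega
        rw [this]; exact hdead z
      have hge : nn z - 1 ≤ nn z' := by
        by_contra hcon
        push_neg at hcon
        have : V (F^[nn z' + 1] z.1) := hlive z _ (by omega)
        rw [Function.iterate_succ_apply] at this
        exact hdead z' this
      omega
    refine ⟨hnn, ?_⟩
    apply Subtype.ext
    show F^[nn z' - 1] (F z.1) = F^[nn z - 1] z.1
    rw [← Function.iterate_succ_apply]
    congr 1
    omega
  have P1 : ∀ z, Relation.EqvGen R z (sink z) := by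
    intro z
    have : ∀ (k : ℕ) (z : {z : Z // V z}), nn z ≤ k → Relation.EqvGen R z (sink z) := by
      intro k
      induction k with
      | zero => intro z hzk; exact absurd (hpos z) (by omega)
      | succ k ih =>
        intro z hzk
        by_cases hz : V (F z.1)
        · obtain ⟨h1, h2⟩ := hstep z hz
          refine Relation.EqvGen.trans _ _ _
            (Relation.EqvGen.rel _ _ ((hR z ⟨F z.1, hz⟩).2 ⟨hz, rfl⟩)) ?_
          rw [← h2]
          exact ih _ (by omega)
        · rw [hfix z hz]; exact Relation.EqvGen.refl z
    exact this (nn z) z le_rfl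
  have P2 : ∀ a b, Relation.EqvGen R a b → sink a = sink b := by
    intro a b hab
    induction hab with
    | rel a b hr =>
      obtain ⟨h1, h2⟩ := (hR a b).1 hr
      have : b = (⟨F a.1, h1⟩ : {z : Z // V z}) := Subtype.ext h2
      rw [this, (hstep a h1).2]
    | refl => rfl
    | symm a b _ ih => exact ih.symm
    | trans a b c _ _ ih1 ih2 => exact ih1.trans ih2
  let sink' : {z : Z // V z} → {z : Z // V z ∧ ¬ V (F z)} :=
    fun z => ⟨(sink z).1, (sink z).2, hsinkdead z⟩
  have hsink' : ∀ a b, Relation.EqvGen R a b → sink' a = sink' b := by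
    intro a b hab
    have h := P2 a b hab
    have hval : (sink a).1 = (sink b).1 := congrArg Subtype.val h
    exact Subtype.ext hval
  have e : Quot (Relation.EqvGen R) ≃ {z : Z // V z ∧ ¬ V (F z)} :=
    { toFun := Quot.lift sink' hsink'
      invFun := fun s => Quot.mk _ ⟨s.1, s.2.1⟩
      left_inv := by
        apply Quot.ind
        intro z
        exact Quot.sound (Relation.EqvGen.symm _ _ (P1 z))
      right_inv := by
        intro s
        apply Subtype.ext
        show (sink ⟨s.1, s.2.1⟩).1 = s.1
        rw [hfix _ s.2.2] }
  exact Nat.card_congr e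

/-- **Proposition (components of the smash product of two rooted trees).**
Let `(X, 0, f)` and `(Y, 0, g)` be finite pointed modules with `f`, `g` nilpotent
and graphs `Γ_X`, `Γ_Y` connected (rooted trees).  Then the graph of the smash
product, on the vertex set of nonzero pairs with the equivalence relation
generated by `(p, h p)` for `h p ≠ (0,0)`, has exactly
`card {x // x ≠ 0} + card {y // y ≠ 0} - 1` equivalence classes:
`Γ_{M ∧ N}` consists of `dim M + dim N - 1` rooted trees. -/
theorem smash_tree_tree_components {X Y : Type*} [Fintype X] [Fintype Y]
    [Zero X] [Zero Y] [DecidableEq X] [DecidableEq Y]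
    (f : X → X) (g : Y → Y) (hf : f 0 = 0) (hg : g 0 = 0)
    (hfnil : ∀ x : X, ∃ n : ℕ, f^[n] x = 0)
    (hgnil : ∀ y : Y, ∃ n : ℕ, g^[n] y = 0)
    (hXconn : Nat.card (Quot (Relation.EqvGen
      (fun x y : {x : X // x ≠ 0} => f (x : X) ≠ 0 ∧ (y : X) = f (x : X)))) = 1)
    (hYconn : Nat.card (Quot (Relation.EqvGen
      (fun x y : {y : Y // y ≠ 0} => g (x : Y) ≠ 0 ∧ (y : Y) = g (x : Y)))) = 1)
    (h : X × Y → X × Y)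
    (hh : ∀ p : X × Y,
      h p = if f p.1 ≠ 0 ∧ g p.2 ≠ 0 then (f p.1, g p.2) else (0, 0)) :
    Nat.card (Quot (Relation.EqvGen
      (fun p q : {p : X × Y // p.1 ≠ 0 ∧ p.2 ≠ 0} =>
        h (p : X × Y) ≠ (0, 0) ∧ (q : X × Y) = h (p : X × Y)))) =
      Nat.card {x : X // x ≠ 0} + Nat.card {y : Y // y ≠ 0} - 1 := by
  classical
  -- unique sink in X
  have hXcard : Nat.card {x : X // x ≠ 0 ∧ ¬ f x ≠ 0} = 1 := by
    have hk := key_sinks (fun x : X => x ≠ 0) f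
      (fun x y : {x : X // x ≠ 0} => f (x : X) ≠ 0 ∧ (y : X) = f (x : X))
      (fun a b => Iff.rfl)
      (fun x _ => (hfnil x).imp (fun n hn => by simp [hn]))
    exact hk.symm.trans hXconn
  have hYcard : Nat.card {y : Y // y ≠ 0 ∧ ¬ g y ≠ 0} = 1 := by
    have hk := key_sinks (fun y : Y => y ≠ 0) g
      (fun x y : {y : Y // y ≠ 0} => g (x : Y) ≠ 0 ∧ (y : Y) = g (x : Y))
      (fun a b => Iff.rfl)
      (fun y _ => (hgnil y).imp (fun n hn => by simp [hn]))
    exact hk.symm.trans hYconn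
  obtain ⟨⟨x0, hx0⟩, hx0u⟩ := Nat.card_eq_one_iff_exists.1 hXcard
  obtain ⟨⟨y0, hy0⟩, hy0u⟩ := Nat.card_eq_one_iff_exists.1 hYcard
  have hx0ne : x0 ≠ 0 := hx0.1
  have hfx0 : f x0 = 0 := not_not.1 hx0.2
  have hy0ne : y0 ≠ 0 := hy0.1
  have hgy0 : g y0 = 0 := not_not.1 hy0.2
  have hxuniq : ∀ x : X, x ≠ 0 → f x = 0 → x = x0 := fun x hx hfx =>
    congrArg Subtype.val (hx0u ⟨x, hx, not_not.2 hfx⟩)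
  have hyuniq : ∀ y : Y, y ≠ 0 → g y = 0 → y = y0 := fun y hy hgy =>
    congrArg Subtype.val (hy0u ⟨y, hy, not_not.2 hgy⟩)
  -- iterates of h
  have hiter : ∀ (k : ℕ) (p : X × Y),
      h^[k] p = (f^[k] p.1, g^[k] p.2) ∨ (h^[k] p).1 = 0 := by
    intro k
    induction k with
    | zero => intro p; left; simp
    | succ k ih =>
      intro p
      rcases ih p with hk | hk
      · rw [Function.iterate_succ_apply', hk, hh]
        by_cases hc : f (f^[k] p.1) ≠ 0 ∧ g (g^[k] p.2) ≠ 0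
        · left
          rw [if_pos (by simpa using hc)]
          rw [Function.iterate_succ_apply', Function.iterate_succ_apply']
        · right
          rw [if_neg (by simpa using hc)]
      · right
        rw [Function.iterate_succ_apply', hh, if_neg]
        intro hcon
        exact hcon.1 (by rw [hk, hf])
  -- nilpotence of h on nonzero pairs
  have hnilS : ∀ p : X × Y, (p.1 ≠ 0 ∧ p.2 ≠ 0) →
      ∃ n : ℕ, ¬ ((h^[n] p).1 ≠ 0 ∧ (h^[n] p).2 ≠ 0) := by
    intro p _
    obtain ⟨n, hn⟩ := hfnil p.1
    refine ⟨n, ?_⟩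
    rcases hiter n p with hk | hk
    · rw [hk]; simp [hn]
    · simp [hk]
  -- h p ≠ (0,0) iff both coordinates nonzero
  have hne : ∀ p : X × Y, h p ≠ (0, 0) ↔ ((h p).1 ≠ 0 ∧ (h p).2 ≠ 0) := by
    intro p
    rw [hh]
    by_cases hc : f p.1 ≠ 0 ∧ g p.2 ≠ 0
    · rw [if_pos hc]
      simp [Prod.ext_iff, hc.1, hc.2]
    · rw [if_neg hc]
      simp
  have hk := key_sinks (fun p : X × Y => p.1 ≠ 0 ∧ p.2 ≠ 0) h
    (fun p q : {p : X × Y // p.1 ≠ 0 ∧ p.2 ≠ 0} =>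
      h (p : X × Y) ≠ (0, 0) ∧ (q : X × Y) = h (p : X × Y))
    (fun a b => and_congr_left' (hne a.1))
    hnilS
  have hequiv : Nat.card {p : X × Y //
        (p.1 ≠ 0 ∧ p.2 ≠ 0) ∧ ¬ ((h p).1 ≠ 0 ∧ (h p).2 ≠ 0)} =
      Nat.card {p : X × Y // p.1 ≠ 0 ∧ p.2 ≠ 0 ∧ (f p.1 = 0 ∨ g p.2 = 0)} := by
    apply Nat.card_congr
    apply Equiv.subtypeEquivRight
    intro p
    rw [hh]
    by_cases hc : f p.1 ≠ 0 ∧ g p.2 ≠ 0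
    · rw [if_pos hc]
      simp [hc.1, hc.2]
    · rw [if_neg hc]
      have hc' : f p.1 = 0 ∨ g p.2 = 0 := by
        by_contra hcc
        push_neg at hcc
        exact hc ⟨hcc.1, hcc.2⟩
      simp [hc', and_assoc]
  have hcount : Nat.card {p : X × Y // p.1 ≠ 0 ∧ p.2 ≠ 0 ∧ (f p.1 = 0 ∨ g p.2 = 0)} =
      Nat.card {x : X // x ≠ 0} + Nat.card {y : Y // y ≠ 0} - 1 := by
    rw [Nat.card_eq_fintype_card, Nat.card_eq_fintype_card, Nat.card_eq_fintype_card,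
      Fintype.card_subtype, Fintype.card_subtype, Fintype.card_subtype]
    have hfilter : (Finset.univ.filter
        (fun p : X × Y => p.1 ≠ 0 ∧ p.2 ≠ 0 ∧ (f p.1 = 0 ∨ g p.2 = 0)))
        = ({x0} ×ˢ Finset.univ.filter (fun y : Y => y ≠ 0)) ∪
          ((Finset.univ.filter (fun x : X => x ≠ 0)) ×ˢ {y0}) := by
      ext p
      simp only [Finset.mem_filter, Finset.mem_univ, true_and, Finset.mem_union,
        Finset.mem_product, Finset.mem_singleton]
      constructor
      · rintro ⟨h1, h2, h3 | h3⟩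
        · exact Or.inl ⟨hxuniq p.1 h1 h3, h2⟩
        · exact Or.inr ⟨h1, hyuniq p.2 h2 h3⟩
      · rintro (⟨he, h2⟩ | ⟨h1, he⟩)
        · exact ⟨he ▸ hx0ne, h2, Or.inl (he ▸ hfx0)⟩
        · exact ⟨h1, he ▸ hy0ne, Or.inr (he ▸ hgy0)⟩
    rw [hfilter]
    have hinter : ({x0} ×ˢ Finset.univ.filter (fun y : Y => y ≠ 0)) ∩
        ((Finset.univ.filter (fun x : X => x ≠ 0)) ×ˢ {y0}) = {(x0, y0)} := by
      ext p
      simp only [Finset.mem_inter, Finset.mem_product, Finset.mem_singleton,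
        Finset.mem_filter, Finset.mem_univ, true_and, Prod.ext_iff]
      constructor
      · rintro ⟨⟨he1, _⟩, _, he2⟩; exact ⟨he1, he2⟩
      · rintro ⟨he1, he2⟩
        exact ⟨⟨he1, he2 ▸ hy0ne⟩, he1 ▸ hx0ne, he2⟩
    have hu := Finset.card_union_add_card_inter
      ({x0} ×ˢ Finset.univ.filter (fun y : Y => y ≠ 0))
      ((Finset.univ.filter (fun x : X => x ≠ 0)) ×ˢ {y0})
    rw [hinter, Finset.card_singleton, Finset.card_product, Finset.card_product,
      Finset.card_singleton] at hu
    simp only [Finset.card_singleton, one_mul, mul_one] at hu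
    have hxpos : 0 < (Finset.univ.filter (fun x : X => x ≠ 0)).card :=
      Finset.card_pos.2 ⟨x0, by simp [hx0ne]⟩
    omega
  exact hk.trans (hequiv.trans hcount)
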